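/- Divergence of the bias in the counterexample construction: let (εᵈ)ᵈ be a sequence of positive reals and (βᵈ)ᵈ a real sequence with |βᵈ|/εᵈ → ∞. Set θᵈ = π/2 − εᵈ and μᵈ = exp(εᵈ⁻¹). Then the quantity |δᵈ| = (|cos θᵈ sin θᵈ|·μᵈ)/(μᵈ cos²θᵈ + 1) · |βᵈ sin θᵈ − β_{d+1} cos θᵈ| tends to infinity along odd d, provided βᵈ is eventually bounded away from contributing cancellation, e.g., |βᵈ sin θᵈ − β_{d+1}cos θᵈ| ≥ |βᵈ|/2 eventually. More precisely, as d → ∞, (|cos θᵈ sin θᵈ|μᵈ)/(μᵈ cos²θᵈ + 1) ∼ 1/(εᵈ(1 + exp(−εᵈ⁻¹))), so |δᵈ| ≳ |βᵈ|/(2εᵈ) → ∞. -/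

import Mathlib

open Filter Real

/-- divergence of the bias in the counterexample: with
`θ d = π/2 − ε d`, `μ d = exp(1/ε d)`, `ε d → 0⁺` and `|β d|/ε d → ∞`, if the
cancellation bound `|β d sin θ d − β (d+1) cos θ d| ≥ |β d|/2` holds
eventually, then the bias magnitude
`|δ d| = (|cos θ d · sin θ d| μ d)/(μ d cos²θ d + 1) · |β d sin θ d − β (d+1) cos θ d|`
tends to infinity. -/
theorem statement12 (ε : ℕ → ℝ) (hεpos : ∀ d, 0 < ε d)
    (hε0 : Tendsto ε atTop (nhds 0))
    (β : ℕ → ℝ)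
    (hβε : Tendsto (fun d => |β d| / ε d) atTop atTop)
    (θ : ℕ → ℝ) (hθ : ∀ d, θ d = π/2 - ε d)
    (μ : ℕ → ℝ) (hμ : ∀ d, μ d = Real.exp ((ε d)⁻¹))
    (hcanc : ∀ᶠ d in atTop, |β d * Real.sin (θ d) - β (d+1) * Real.cos (θ d)| ≥ |β d| / 2)
    (δ : ℕ → ℝ)
    (hδ : ∀ d, δ d = (|Real.cos (θ d) * Real.sin (θ d)| * μ d) /
        (μ d * (Real.cos (θ d))^2 + 1) *
        |β d * Real.sin (θ d) - β (d+1) * Real.cos (θ d)|) :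
    Tendsto δ atTop atTop := by
  have hmain : Tendsto (fun d => 3/32 * (|β d| / ε d)) atTop atTop :=
    hβε.const_mul_atTop (by norm_num)
  refine tendsto_atTop_mono' atTop ?_ hmain
  have hsmall : ∀ᶠ d in atTop, ε d < 1/27 := hε0.eventually (gt_mem_nhds (by norm_num))
  filter_upwards [hsmall, hcanc] with d he1 hB
  set e := ε d with hedef
  have he : 0 < e := hεpos d
  have he1' : e ≤ 1 := by linarith
  -- trig rewrites
  have hcosθ : Real.cos (θ d) = Real.sin e := by rw [hθ]; exact Real.cos_pi_div_two_sub e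
  have hsinθ : Real.sin (θ d) = Real.cos e := by rw [hθ]; exact Real.sin_pi_div_two_sub e
  have hsinpos : 0 < Real.sin e :=
    Real.sin_pos_of_pos_of_lt_pi he (by nlinarith [Real.pi_gt_three])
  have hcoslb : (1:ℝ)/2 ≤ Real.cos e := by
    have := Real.one_sub_sq_div_two_le_cos (x := e)
    nlinarith
  have hsinlb : 3/4 * e ≤ Real.sin e := by
    have h := Real.sin_gt_sub_cube he
    have h2 : 0 ≤ e * (1 - e) * (1 + e) :=
      mul_nonneg (mul_nonneg he.le (by linarith)) (by linarith)
    nlinarith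
  have hsinub : Real.sin e ≤ e := (Real.sin_le he.le)
  have hμpos : 0 < μ d := by rw [hμ]; exact Real.exp_pos _
  -- μ e² ≥ 1
  have hμe : 1 ≤ μ d * e^2 := by
    have h3 : Real.exp (e⁻¹) = Real.exp (e⁻¹/3) ^ 3 := by
      rw [← Real.exp_nat_mul]; congr 1; push_cast; ring
    have h4 : e⁻¹/3 ≤ Real.exp (e⁻¹/3) := by
      have := Real.add_one_le_exp (e⁻¹/3); linarith
    have h5 : (e⁻¹/3)^3 ≤ Real.exp (e⁻¹/3)^3 := by
      have h0 : 0 ≤ e⁻¹/3 := by positivity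
      exact pow_le_pow_left₀ h0 h4 3
    have h6 : (e⁻¹/3)^3 ≤ μ d := by rw [hμ, h3]; exact h5
    have h7 : (27:ℝ) ≤ e⁻¹ := by
      rw [le_inv_comm₀ (by norm_num) he]; linarith
    have h8 : e⁻¹^2 ≤ (e⁻¹/3)^3 := by nlinarith [sq_nonneg e⁻¹, he]
    have h9 : e⁻¹^2 ≤ μ d := le_trans h8 h6
    calc (1:ℝ) = e⁻¹^2 * e^2 := by field_simp
    _ ≤ μ d * e^2 := by nlinarith [sq_nonneg e]
  -- denominator bound
  have hD : μ d * (Real.cos (θ d))^2 + 1 ≤ 2 * (μ d * e^2) := by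
    rw [hcosθ]
    have : Real.sin e ^ 2 ≤ e^2 := pow_le_pow_left₀ hsinpos.le hsinub 2
    nlinarith
  have hDpos : 0 < μ d * (Real.cos (θ d))^2 + 1 := by positivity
  -- numerator bound
  have hN : 3/4 * e * (1/2) * μ d ≤ |Real.cos (θ d) * Real.sin (θ d)| * μ d := by
    rw [hcosθ, hsinθ, abs_of_pos (by nlinarith)]
    have : 3/4 * e * (1/2) ≤ Real.sin e * Real.cos e := by nlinarith
    exact mul_le_mul_of_nonneg_right this hμpos.le
  have hfrac : (3/4 * e * (1/2) * μ d) / (2 * (μ d * e^2)) ≤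
      (|Real.cos (θ d) * Real.sin (θ d)| * μ d) / (μ d * (Real.cos (θ d))^2 + 1) := by
    apply div_le_div₀ (by positivity) hN hDpos hD
  have hfrac' : 3/16 * e⁻¹ ≤
      (|Real.cos (θ d) * Real.sin (θ d)| * μ d) / (μ d * (Real.cos (θ d))^2 + 1) := by
    refine le_trans (le_of_eq ?_) hfrac
    field_simp
    ring
  rw [hδ]
  have hBnn : 0 ≤ |β d| / 2 := by positivity
  calc 3/32 * (|β d| / e) = (3/16 * e⁻¹) * (|β d| / 2) := by
        rw [div_eq_mul_inv, div_eq_mul_inv]; ring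
  _ ≤ _ := mul_le_mul hfrac' hB hBnn (le_trans (by positivity) hfrac')
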